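/- Let N be a subgroup of S_n and χ a class function on N. Define the cycle index Z_N(χ) = (1/|N|) ∑_{w ∈ N} χ(w) ∏_i a_i^{n_i(w)}, where n_i(w) is the number of i-cycles of w, as an element of the polynomial ring in variables a_1,...,a_n. Then Z_{S_n}(Ind_N^{S_n} χ) = Z_N(χ), where Ind_N^{S_n} χ is the induced class function on S_n. -/

import Mathlib

open Equiv Finset

/-- The number of `i`-cycles of `w` (fixed points count as 1-cycles): the number of points
lying on an orbit of size `i`, divided by `i`. -/
def cycCount {n : ℕ} (w : Perm (Fin n)) (i : ℕ) : ℕ :=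
  (Finset.univ.filter (fun x : Fin n =>
    (Finset.univ.filter (fun y : Fin n => w.SameCycle x y)).card = i)).card / i

open scoped Classical in
/-- The cycle index `Z_H(χ) = (1/|H|) ∑_{w ∈ H} χ(w) ∏_i a_i^{n_i(w)}`, as a polynomial in
variables `a_1, ..., a_n` (indexed by `ℕ`). -/
noncomputable def cycleIndex {n : ℕ} (K : Type*) [Field K]
    (H : Subgroup (Perm (Fin n))) (χ : Perm (Fin n) → K) : MvPolynomial ℕ K :=
  (Nat.card H : K)⁻¹ • ∑ w : H,
    χ (w : Perm (Fin n)) •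
      ∏ i ∈ Finset.Icc 1 n, (MvPolynomial.X i) ^ (cycCount (w : Perm (Fin n)) i)

lemma card_filter_perm {α : Type*} [Fintype α] (e : Equiv.Perm α) (p : α → Prop)
    [DecidablePred p] [DecidablePred fun a => p (e a)] :
    (Finset.univ.filter fun a => p (e a)).card = (Finset.univ.filter p).card :=
  Finset.card_bij' (fun a _ => e a) (fun b _ => e.symm b)
    (by simp) (by simp) (by simp) (by simp)

open scoped Classical in
lemma cycCount_conj {n : ℕ} (g x : Perm (Fin n)) (i : ℕ) :
    cycCount (x⁻¹ * g * x) i = cycCount g i := by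
  unfold cycCount
  congr 1
  have hsc : ∀ a b : Fin n, (x⁻¹ * g * x).SameCycle a b ↔ g.SameCycle (x a) (x b) := by
    intro a b
    have := Equiv.Perm.sameCycle_conj (f := g) (g := x⁻¹) (x := a) (y := b)
    simpa using this
  have h2 : ∀ a : Fin n,
      (Finset.univ.filter fun y : Fin n => (x⁻¹ * g * x).SameCycle a y).card
        = (Finset.univ.filter fun y : Fin n => g.SameCycle (x a) y).card := by
    intro a
    rw [show (Finset.univ.filter fun y : Fin n => (x⁻¹ * g * x).SameCycle a y)
        = Finset.univ.filter fun y : Fin n => g.SameCycle (x a) (x y) by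
      apply Finset.filter_congr; intro y _; simp [hsc]]
    exact card_filter_perm x (fun y => g.SameCycle (x a) y)
  simp_rw [h2]
  exact card_filter_perm x (fun a => (Finset.univ.filter fun y : Fin n => g.SameCycle a y).card = i)

open scoped Classical in
/-- If `χ` is a class function on a subgroup `H ≤ S_n` with values in a field of
characteristic zero, then `Z_{S_n}(Ind_H^{S_n} χ) = Z_H(χ)`. -/
theorem cycleIndex_induced (n : ℕ) (K : Type*) [Field K] [CharZero K]
    (H : Subgroup (Perm (Fin n))) (χ : Perm (Fin n) → K)
    (hχ : ∀ g x : Perm (Fin n), g ∈ H → x ∈ H → χ (x⁻¹ * g * x) = χ g) :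
    cycleIndex K (⊤ : Subgroup (Perm (Fin n)))
      (fun g => (Nat.card H : K)⁻¹ *
        ∑ x : Perm (Fin n), if x⁻¹ * g * x ∈ H then χ (x⁻¹ * g * x) else 0) =
    cycleIndex K H χ := by
  classical
  unfold cycleIndex
  set P : Perm (Fin n) → MvPolynomial ℕ K :=
    fun g => ∏ i ∈ Finset.Icc 1 n, (MvPolynomial.X i) ^ (cycCount g i) with hP
  set F : Perm (Fin n) → MvPolynomial ℕ K :=
    fun h => (if h ∈ H then χ h else 0) • P h with hF
  set S : MvPolynomial ℕ K := ∑ h : Perm (Fin n), F h with hS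
  have hPconj : ∀ x g : Perm (Fin n), P (x⁻¹ * g * x) = P g := by
    intro x g; simp only [hP]; simp_rw [cycCount_conj]
  have hR : S = ∑ w : H, χ (w : Perm (Fin n)) • P (w : Perm (Fin n)) := by
    rw [hS]
    simp only [hF, ite_smul, zero_smul]
    rw [← Finset.sum_filter]
    exact Finset.sum_subtype _ (by simp) _
  have hconj : ∀ x : Perm (Fin n),
      (∑ g : Perm (Fin n), (if x⁻¹ * g * x ∈ H then χ (x⁻¹ * g * x) else 0) • P g) = S := by
    intro x
    rw [hS]
    refine Fintype.sum_bijective (fun g => x⁻¹ * g * x) ?_ _ _ ?_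
    · constructor
      · intro a b hab
        exact mul_left_cancel (mul_right_cancel hab)
      · intro b; exact ⟨x * b * x⁻¹, by group⟩
    · intro g
      simp only [hF, hPconj]
  have hL1 : (∑ w : (⊤ : Subgroup (Perm (Fin n))),
      ((Nat.card H : K)⁻¹ *
        ∑ x : Perm (Fin n), if x⁻¹ * (w : Perm (Fin n)) * x ∈ H then
          χ (x⁻¹ * (w : Perm (Fin n)) * x) else 0) • P (w : Perm (Fin n)))
      = ∑ g : Perm (Fin n),
      ((Nat.card H : K)⁻¹ *
        ∑ x : Perm (Fin n), if x⁻¹ * g * x ∈ H then χ (x⁻¹ * g * x) else 0) • P g :=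
    Fintype.sum_equiv Subgroup.topEquiv.toEquiv _ _ (fun w => rfl)
  rw [hL1, ← hR]
  simp_rw [mul_smul]
  rw [← Finset.smul_sum]
  simp_rw [Finset.sum_smul]
  rw [Finset.sum_comm]
  simp_rw [hconj]
  rw [Finset.sum_const, Finset.card_univ, Subgroup.card_top, Nat.card_eq_fintype_card,
    ← Nat.cast_smul_eq_nsmul K]
  have hd : (Fintype.card (Perm (Fin n)) : K) ≠ 0 :=
    Nat.cast_ne_zero.mpr Fintype.card_ne_zero
  rw [smul_smul, smul_smul]
  congr 1
  field_simp
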